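/- arXiv:2304.07685 — 2 statements merged into one kernel-verified Lean document; each statement's English description precedes it below -/
import Mathlib

section
/- Let X and U be Polish spaces and let μ_n be a sequence of probability measures on X × U all having the same X-marginal ν. If μ_n converges weakly to a probability measure μ (which then also has X-marginal ν), then for every bounded measurable function g: X × U → ℝ such that u ↦ g(x,u) is continuous for each fixed x, we have ∫ g dμ_n → ∫ g dμ. -/
open MeasureTheory Filter Topology Set
open scoped ENNReal NNReal BoundedContinuousFunction

lemma aux_clamp {C a b : ℝ} (ha : |a| ≤ C) : |a - max (-C) (min C b)| ≤ |a - b| := by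
  have h1 : max (-C) (min C a) = a := by
    rw [min_eq_right (abs_le.1 ha).2, max_eq_right (abs_le.1 ha).1]
  calc |a - max (-C) (min C b)| = |max (-C) (min C a) - max (-C) (min C b)| := by rw [h1]
    _ = |max (min C a) (-C) - max (min C b) (-C)| := by
        rw [max_comm (-C) (min C a), max_comm (-C) (min C b)]
    _ ≤ |min C a - min C b| := abs_max_sub_max_le_abs _ _ _
    _ ≤ max |C - C| |a - b| := abs_min_sub_min_le_max _ _ _ _
    _ = |a - b| := by simp

lemma aux_measurable {δ E : Type*} [MeasurableSpace δ] [MetricSpace E]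
    [SecondCountableTopology E] [MeasurableSpace E] [BorelSpace E] [Nonempty E]
    {f : δ → E} (h : ∀ (c : E) (r : ℝ), MeasurableSet {x | dist (f x) c ≤ r}) :
    Measurable f := by
  have hball : ∀ (c : E) (q : ℝ), MeasurableSet (f ⁻¹' Metric.ball c q) := by
    intro c q
    have : f ⁻¹' Metric.ball c q = ⋃ i : ℕ, {x | dist (f x) c ≤ q - 1 / (i + 1)} := by
      ext x
      simp only [Set.mem_preimage, Metric.mem_ball, Set.mem_iUnion, Set.mem_setOf_eq]
      constructor
      · intro hx
        obtain ⟨i, hi⟩ := exists_nat_one_div_lt (sub_pos.2 hx)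
        exact ⟨i, by linarith⟩
      · rintro ⟨i, hi⟩
        have : (0:ℝ) < 1 / (i + 1) := by positivity
        linarith
    rw [this]
    exact MeasurableSet.iUnion fun i => h c _
  apply measurable_of_isOpen
  intro s hs
  set u : ℕ → E := TopologicalSpace.denseSeq E with hu
  have hdense : DenseRange u := TopologicalSpace.denseRange_denseSeq E
  have hrep : s = ⋃ (p : ℕ × ℚ) (_ : Metric.ball (u p.1) (p.2 : ℝ) ⊆ s),
      Metric.ball (u p.1) (p.2 : ℝ) := by
    ext y
    simp only [Set.mem_iUnion]
    constructor
    · intro hy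
      obtain ⟨ε, hε, hb⟩ := Metric.isOpen_iff.1 hs y hy
      obtain ⟨q, hq0, hqε⟩ := exists_rat_btwn (half_pos hε)
      obtain ⟨n, hn⟩ := Metric.denseRange_iff.1 hdense y (q : ℝ) (by exact_mod_cast hq0)
      refine ⟨(n, q), ?_, ?_⟩
      · intro w hw
        apply hb
        have h1 : dist w y ≤ dist w (u n) + dist (u n) y := dist_triangle _ _ _
        have h2 : dist (u n) y = dist y (u n) := dist_comm _ _
        simp only [Metric.mem_ball] at hw ⊢
        have : dist w y < (q:ℝ) + (q:ℝ) := by rw [h2] at h1; linarith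
        linarith
      · simpa [Metric.mem_ball, dist_comm] using hn
    · rintro ⟨p, hsub, hmem⟩
      exact hsub hmem
  rw [hrep]
  rw [Set.preimage_iUnion]
  refine MeasurableSet.iUnion fun p => ?_
  rw [Set.preimage_iUnion]
  exact MeasurableSet.iUnion fun _ => hball _ _

lemma aux_tight {V : Type*} [MeasurableSpace V] [MetricSpace V] [CompleteSpace V]
    [SecondCountableTopology V] [BorelSpace V] [Nonempty V]
    (ρ : Measure V) (ρs : ℕ → Measure V)
    [IsProbabilityMeasure ρ] [∀ n, IsProbabilityMeasure (ρs n)]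
    (h : ∀ G : Set V, IsOpen G → ρ G ≤ atTop.liminf fun n => ρs n G)
    {ε : ℝ≥0∞} (hε : 0 < ε) (hε1 : ε ≤ 1) :
    ∃ K : Set V, IsCompact K ∧ ρ Kᶜ ≤ ε ∧ ∀ n, ρs n Kᶜ ≤ ε := by
  classical
  set c : ℕ → V := TopologicalSpace.denseSeq V with hc
  have hdense : DenseRange c := TopologicalSpace.denseRange_denseSeq V
  -- the basic open sets
  set W : ℕ → ℕ → Set V := fun k m => ⋃ i < m, Metric.ball (c i) (1 / (k + 1 : ℝ)) with hW
  have hWopen : ∀ k m, IsOpen (W k m) := by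
    intro k m
    exact isOpen_biUnion fun i _ => Metric.isOpen_ball
  have hWmono : ∀ k, Monotone (W k) := by
    intro k m m' hmm
    exact Set.biUnion_subset_biUnion_left fun i hi => lt_of_lt_of_le hi hmm
  have hWunion : ∀ k, (⋃ m, W k m) = univ := by
    intro k
    apply eq_univ_of_forall
    intro v
    have hr : (0 : ℝ) < 1 / (k + 1 : ℝ) := by positivity
    obtain ⟨i, hi⟩ := Metric.denseRange_iff.1 hdense v _ hr
    exact Set.mem_iUnion.2 ⟨i + 1, Set.mem_biUnion (Nat.lt_succ_self i) (by
      simpa [Metric.mem_ball, dist_comm] using hi)⟩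
  -- single measure exhaustion
  have key : ∀ (τ : Measure V) (_ : IsProbabilityMeasure τ) (k : ℕ) {δ : ℝ≥0∞}, 0 < δ →
      ∃ m, τ (W k m)ᶜ < δ := by
    intro τ hτ k δ hδ
    have hAnti : Antitone (fun m => (W k m)ᶜ) := fun m m' hmm =>
      Set.compl_subset_compl.2 (hWmono k hmm)
    have hInter : (⋂ m, (W k m)ᶜ) = ∅ := by
      rw [← Set.compl_iUnion, hWunion k, Set.compl_univ]
    have htend : Tendsto (fun m => τ (W k m)ᶜ) atTop (𝓝 (τ (⋂ m, (W k m)ᶜ))) := by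
      apply tendsto_measure_iInter_atTop
        (fun m => ((hWopen k m).isClosed_compl.measurableSet).nullMeasurableSet) hAnti
        ⟨0, measure_ne_top τ _⟩
    rw [hInter, measure_empty] at htend
    have := (htend.eventually (eventually_lt_nhds hδ)).exists
    simpa using this
  -- for each scale k, find a good m
  have main : ∀ k : ℕ, ∃ m, ρ (W k m)ᶜ ≤ ε / 2 ^ (k + 1) ∧ ∀ n, ρs n (W k m)ᶜ ≤ ε / 2 ^ (k + 1) := by
    intro k
    set δ : ℝ≥0∞ := ε / 2 ^ (k + 1) with hδdef
    have hδpos : 0 < δ := ENNReal.div_pos hε.ne' (by simp)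
    have hδ1 : δ ≤ 1 := by
      apply ENNReal.div_le_of_le_mul
      rw [one_mul]
      exact hε1.trans (one_le_two.trans (le_self_pow₀ one_le_two (Nat.succ_ne_zero k)))
    obtain ⟨m₀, hm₀⟩ := key ρ inferInstance k hδpos
    -- liminf step
    have hρW : (1 : ℝ≥0∞) - δ < ρ (W k m₀) := by
      have h1 : ρ (W k m₀) = 1 - ρ (W k m₀)ᶜ := by
        rw [prob_compl_eq_one_sub (hWopen k m₀).measurableSet]
        exact (ENNReal.sub_sub_cancel ENNReal.one_ne_top prob_le_one).symm
      rw [h1]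
      exact (AddLECancellable.tsub_lt_tsub_iff_left_of_le
        (ENNReal.cancel_of_ne ENNReal.one_ne_top)
        (ENNReal.cancel_of_ne (hδ1.trans_lt ENNReal.one_lt_top).ne) hδ1).2 hm₀
    have hlim : (1 : ℝ≥0∞) - δ < atTop.liminf fun n => ρs n (W k m₀) :=
      lt_of_lt_of_le hρW (h _ (hWopen k m₀))
    obtain ⟨N, hN⟩ := (eventually_lt_of_lt_liminf hlim).exists_forall_of_atTop
    -- small n
    have hsmall : ∀ n, ∃ m, ρs n (W k m)ᶜ < δ := fun n => key (ρs n) inferInstance k hδpos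
    choose mf hmf using hsmall
    refine ⟨m₀ ⊔ (Finset.range N).sup mf, ?_, ?_⟩
    · exact le_trans (measure_mono (Set.compl_subset_compl.2 (hWmono k le_sup_left))) hm₀.le
    · intro n
      rcases lt_or_ge n N with hn | hn
      · refine le_trans (measure_mono (Set.compl_subset_compl.2 (hWmono k ?_))) (hmf n).le
        exact le_sup_of_le_right (Finset.le_sup (Finset.mem_range.2 hn))
      · have h1 : 1 - δ < ρs n (W k m₀) := hN n hn
        have h2 : ρs n (W k (m₀ ⊔ (Finset.range N).sup mf))ᶜ ≤ ρs n (W k m₀)ᶜ :=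
          measure_mono (Set.compl_subset_compl.2 (hWmono k le_sup_left))
        refine h2.trans ?_
        rw [prob_compl_eq_one_sub (hWopen k m₀).measurableSet]
        calc (1 : ℝ≥0∞) - ρs n (W k m₀) ≤ 1 - (1 - δ) := tsub_le_tsub_left h1.le 1
          _ = δ := ENNReal.sub_sub_cancel ENNReal.one_ne_top hδ1
  have hsum : ∑' (k : ℕ), ε / 2 ^ (k + 1) = ε := by
    have h2 : ∀ k : ℕ, ε / 2 ^ (k + 1) = ε * 2⁻¹ ^ (k + 1) := fun k => by
      rw [div_eq_mul_inv, ENNReal.inv_pow]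
    simp_rw [h2]
    rw [ENNReal.tsum_mul_left, ENNReal.tsum_geometric_add_one, ENNReal.one_sub_inv_two, inv_inv,
      ENNReal.inv_mul_cancel two_ne_zero ENNReal.ofNat_ne_top, mul_one]
  choose m hm using main
  refine ⟨⋂ k, closure (W k (m k)), ?_, ?_, ?_⟩
  · apply TotallyBounded.isCompact_of_isClosed
    · rw [Metric.totallyBounded_iff]
      intro δ hδ
      obtain ⟨k, hk⟩ := exists_nat_one_div_lt hδ
      refine ⟨c '' Set.Iio (m k), (Set.finite_Iio _).image _, ?_⟩
      have h1 : (⋂ k', closure (W k' (m k'))) ⊆ closure (W k (m k)) := Set.iInter_subset _ k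
      refine h1.trans ?_
      have h2 : closure (W k (m k)) ⊆ ⋃ i < m k, closure (Metric.ball (c i) (1 / (k + 1 : ℝ))) := by
        have heq : W k (m k) = ⋃ i ∈ Set.Iio (m k), Metric.ball (c i) (1 / (k + 1 : ℝ)) := rfl
        rw [heq, (Set.finite_Iio (m k)).closure_biUnion]
        exact subset_rfl
      refine h2.trans ?_
      intro v hv
      simp only [Set.mem_iUnion] at hv ⊢
      obtain ⟨i, hi, hvi⟩ := hv
      refine ⟨c i, ⟨Set.mem_image_of_mem c hi, ?_⟩⟩
      have := Metric.closure_ball_subset_closedBall hvi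
      exact Metric.closedBall_subset_ball (by exact_mod_cast hk) this
    · exact isClosed_iInter fun k => isClosed_closure
  · calc ρ (⋂ k, closure (W k (m k)))ᶜ ≤ ∑' k, ρ (W k (m k))ᶜ := by
          rw [Set.compl_iInter]
          refine (measure_iUnion_le _).trans ?_
          exact ENNReal.tsum_le_tsum fun k => measure_mono
            (Set.compl_subset_compl.2 subset_closure)
      _ ≤ ∑' k, ε / 2 ^ (k + 1) := ENNReal.tsum_le_tsum fun k => (hm k).1
      _ = ε := hsum
  · intro n
    calc ρs n (⋂ k, closure (W k (m k)))ᶜ ≤ ∑' k, ρs n (W k (m k))ᶜ := by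
          rw [Set.compl_iInter]
          refine (measure_iUnion_le _).trans ?_
          exact ENNReal.tsum_le_tsum fun k => measure_mono
            (Set.compl_subset_compl.2 subset_closure)
      _ ≤ ∑' k, ε / 2 ^ (k + 1) := ENNReal.tsum_le_tsum fun k => (hm k).2 n
      _ = ε := hsum

/-- Weak convergence of probability measures on a product of Polish spaces with a common
first marginal upgrades to w-s (setwise-in-x, weak-in-u) convergence. -/
theorem stmt0 {X U : Type*} [MeasurableSpace X] [TopologicalSpace X] [PolishSpace X]
    [BorelSpace X] [MeasurableSpace U] [TopologicalSpace U] [PolishSpace U] [BorelSpace U]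
    (μn : ℕ → Measure (X × U)) (μ : Measure (X × U)) (ν : Measure X)
    [∀ n, IsProbabilityMeasure (μn n)] [IsProbabilityMeasure μ]
    (hmargn : ∀ n, (μn n).map Prod.fst = ν) (hmarg : μ.map Prod.fst = ν)
    (hweak : ∀ g : X × U → ℝ, Continuous g → (∃ C, ∀ z, |g z| ≤ C) →
      Tendsto (fun n => ∫ z, g z ∂(μn n)) atTop (𝓝 (∫ z, g z ∂μ))) :
    ∀ g : X × U → ℝ, Measurable g → (∃ C, ∀ z, |g z| ≤ C) →
      (∀ x : X, Continuous fun u => g (x, u)) →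
      Tendsto (fun n => ∫ z, g z ∂(μn n)) atTop (𝓝 (∫ z, g z ∂μ)) := by
  classical
  intro g hgm hgb hgu
  letI := TopologicalSpace.upgradeIsCompletelyMetrizable X
  letI := TopologicalSpace.upgradeIsCompletelyMetrizable U
  -- nonemptiness
  have hXU : Nonempty (X × U) := by
    by_contra hne
    rw [not_nonempty_iff] at hne
    have h1 : μ Set.univ = 1 := measure_univ
    rw [Set.univ_eq_empty_iff.mpr hne, measure_empty] at h1
    exact zero_ne_one h1
  haveI : Nonempty X := hXU.map Prod.fst
  haveI : Nonempty U := hXU.map Prod.snd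
  -- the bound
  obtain ⟨C₀, hC₀⟩ := hgb
  set C : ℝ := max C₀ 0 with hCdef
  have hC : ∀ z, |g z| ≤ C := fun z => (hC₀ z).trans (le_max_left _ _)
  have hC0 : (0 : ℝ) ≤ C := le_max_right _ _
  -- marginal measures
  haveI : IsProbabilityMeasure ν := by
    rw [← hmarg]; exact Measure.isProbabilityMeasure_map measurable_fst.aemeasurable
  set ρs : ℕ → Measure U := fun n => (μn n).map Prod.snd with hρs
  set ρ : Measure U := μ.map Prod.snd with hρ
  haveI : ∀ n, IsProbabilityMeasure (ρs n) := fun n =>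
    Measure.isProbabilityMeasure_map measurable_snd.aemeasurable
  haveI : IsProbabilityMeasure ρ := Measure.isProbabilityMeasure_map measurable_snd.aemeasurable
  -- weak convergence of the U-marginals, in the open-liminf form
  have hρweak : ∀ G : Set U, IsOpen G → ρ G ≤ atTop.liminf fun n => ρs n G := by
    set P : ProbabilityMeasure U := ⟨ρ, inferInstance⟩ with hP
    set Ps : ℕ → ProbabilityMeasure U := fun n => ⟨ρs n, inferInstance⟩ with hPs
    have htend : Tendsto Ps atTop (𝓝 P) := by
      rw [ProbabilityMeasure.tendsto_iff_forall_integral_tendsto]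
      intro f
      have hrw : ∀ mm : Measure (X × U),
          ∫ u, f u ∂(mm.map Prod.snd) = ∫ z, f z.2 ∂mm := fun mm =>
        integral_map measurable_snd.aemeasurable f.continuous.aestronglyMeasurable
      have : (fun n => ∫ u, f u ∂(Ps n : Measure U)) = fun n => ∫ z, f z.2 ∂(μn n) := by
        funext n; exact hrw (μn n)
      rw [this, show ∫ u, f u ∂(P : Measure U) = ∫ z, f z.2 ∂μ from hrw μ]
      exact hweak (fun z => f z.2) (f.continuous.comp continuous_snd)
        ⟨‖f‖, fun z => by
          simpa [Real.norm_eq_abs] using f.norm_coe_le_norm z.2⟩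
    intro G hG
    exact ProbabilityMeasure.le_liminf_measure_open_of_tendsto htend hG
  -- start the ε-argument
  rw [Metric.tendsto_atTop]
  intro ε hε
  -- parameters
  set η : ℝ := ε / (6 * (2 * C + 1)) with hηdef
  have h2C1 : (0 : ℝ) < 2 * C + 1 := by linarith
  have hη : 0 < η := by
    apply div_pos hε; positivity
  set ηE : ℝ≥0∞ := min (ENNReal.ofReal η) 1 with hηE
  have hηEpos : 0 < ηE := lt_min (ENNReal.ofReal_pos.2 hη) zero_lt_one
  have hηE1 : ηE ≤ 1 := min_le_right _ _
  -- uniform tightness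
  obtain ⟨K₀, hK₀c, hK₀ρ, hK₀ρs⟩ := aux_tight ρ ρs hρweak hηEpos hηE1
  obtain ⟨u₀⟩ := ‹Nonempty U›
  set K : Set U := insert u₀ K₀ with hKdef
  have hKcomp : IsCompact K := hK₀c.insert u₀
  have hKρ : ρ Kᶜ ≤ ηE :=
    le_trans (measure_mono (Set.compl_subset_compl.2 (Set.subset_insert _ _))) hK₀ρ
  have hKρs : ∀ n, ρs n Kᶜ ≤ ηE := fun n =>
    le_trans (measure_mono (Set.compl_subset_compl.2 (Set.subset_insert _ _))) (hK₀ρs n)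
  haveI : CompactSpace ↥K := isCompact_iff_compactSpace.1 hKcomp
  haveI : Nonempty ↥K := ⟨⟨u₀, Set.mem_insert _ _⟩⟩
  letI : MeasurableSpace C(↥K, ℝ) := borel _
  haveI : BorelSpace C(↥K, ℝ) := ⟨rfl⟩
  -- the map into continuous functions on K
  set G : X → C(↥K, ℝ) := fun x => ⟨fun u => g (x, ↑u), (hgu x).comp continuous_subtype_val⟩
    with hGdef
  have hGmeas : Measurable G := by
    apply aux_measurable
    intro c r
    rcases lt_or_ge r 0 with hr | hr
    · have : {x | dist (G x) c ≤ r} = ∅ := by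
        apply Set.eq_empty_of_forall_notMem
        intro x hx
        exact absurd (le_trans dist_nonneg hx) (not_le.2 hr)
      rw [this]; exact MeasurableSet.empty
    · obtain ⟨D, hDc, hDd⟩ := TopologicalSpace.exists_countable_dense ↥K
      have hset : {x | dist (G x) c ≤ r} = ⋂ d ∈ D, {x | dist (g (x, ↑d)) (c d) ≤ r} := by
        ext x
        simp only [Set.mem_setOf_eq, Set.mem_iInter]
        rw [ContinuousMap.dist_le hr]
        constructor
        · intro hx d _
          exact hx d
        · intro hx u
          have hclosed : IsClosed {u : ↥K | dist (G x u) (c u) ≤ r} :=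
            isClosed_le (((G x).continuous.dist c.continuous)) continuous_const
          have hsub : closure D ⊆ {u : ↥K | dist (G x u) (c u) ≤ r} :=
            hclosed.closure_subset_iff.2 fun d hd => hx d hd
          rw [hDd.closure_eq] at hsub
          exact hsub (Set.mem_univ u)
      rw [hset]
      haveI := hDc.to_subtype
      refine MeasurableSet.biInter hDc fun d _ => ?_
      have hmeas : Measurable fun x => dist (g (x, (d : ↥K))) (c d) :=
        (hgm.comp (measurable_id.prodMk measurable_const)).dist measurable_const
      exact measurableSet_le hmeas measurable_const
  have hGsm : StronglyMeasurable G := hGmeas.stronglyMeasurable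
  have hGbound : ∀ x, ‖G x‖ ≤ C := fun x =>
    (ContinuousMap.norm_le _ hC0).2 fun u => by
      rw [Real.norm_eq_abs]; exact hC (x, ↑u)
  have hGint : Integrable G ν :=
    Integrable.mono' (integrable_const C) hGsm.aestronglyMeasurable
      (Filter.Eventually.of_forall hGbound)
  set ε₁ : ℝ := ε / 6 with hε₁
  obtain ⟨H, hHint, _⟩ := hGint.exists_boundedContinuous_integral_sub_le (by positivity : 0 < ε₁)
  -- the closed strip X × K and the Tietze extension of the clamped function
  set s : Set (X × U) := Prod.snd ⁻¹' K with hsdef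
  have hs_closed : IsClosed s := hKcomp.isClosed.preimage continuous_snd
  have hs_meas : MeasurableSet s := hs_closed.measurableSet
  have hφcont : Continuous fun z : ↥s => max (-C) (min C (H (z : X × U).1 ⟨(z : X × U).2, z.2⟩)) := by
    have hc1 : Continuous fun z : ↥s => (H (z : X × U).1, (⟨(z : X × U).2, z.2⟩ : ↥K)) :=
      (H.continuous.comp (continuous_fst.comp continuous_subtype_val)).prodMk
        ((continuous_snd.comp continuous_subtype_val).subtype_mk _)
    have hc2 : Continuous fun z : ↥s => H (z : X × U).1 ⟨(z : X × U).2, z.2⟩ :=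
      (H.continuous.comp (continuous_fst.comp continuous_subtype_val)).eval
        ((continuous_snd.comp continuous_subtype_val).subtype_mk _)
    exact continuous_const.max (continuous_const.min hc2)
  set φ : ↥s →ᵇ ℝ := BoundedContinuousFunction.mkOfBound
    ⟨fun z => max (-C) (min C (H (z : X × U).1 ⟨(z : X × U).2, z.2⟩)), hφcont⟩
    (2 * C)
    (by
      intro x y
      rw [Real.dist_eq, abs_le]
      have hx1 : -C ≤ max (-C) (min C (H (x : X × U).1 ⟨(x : X × U).2, x.2⟩)) := le_max_left _ _
      have hx2 : max (-C) (min C (H (x : X × U).1 ⟨(x : X × U).2, x.2⟩)) ≤ C :=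
        max_le (by linarith) (min_le_left _ _)
      have hy1 : -C ≤ max (-C) (min C (H (y : X × U).1 ⟨(y : X × U).2, y.2⟩)) := le_max_left _ _
      have hy2 : max (-C) (min C (H (y : X × U).1 ⟨(y : X × U).2, y.2⟩)) ≤ C :=
        max_le (by linarith) (min_le_left _ _)
      constructor <;> simp only [ContinuousMap.coe_mk] <;> linarith) with hφdef
  have hφmem : ∀ z : ↥s, φ z ∈ Set.Icc (-C) C := by
    intro z
    refine ⟨le_max_left _ _, max_le (by linarith) (min_le_left _ _)⟩
  obtain ⟨g₁, hg₁mem, hg₁e⟩ :=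
    BoundedContinuousFunction.exists_extension_forall_mem_Icc_of_isClosedEmbedding φ hφmem
      (by linarith : -C ≤ C) hs_closed.isClosedEmbedding_subtypeVal
  set g' : X × U → ℝ := ⇑g₁ with hg'def
  -- the per-measure estimate
  have hEst : ∀ mm : Measure (X × U), IsProbabilityMeasure mm → mm.map Prod.fst = ν →
      (mm.map Prod.snd) Kᶜ ≤ ηE → |(∫ z, g z ∂mm) - ∫ z, g' z ∂mm| ≤ ε₁ + 2 * C * η := by
    intro mm hmm hfst hsnd
    haveI := hmm
    have hg_int : Integrable g mm :=
      Integrable.mono' (integrable_const C) hgm.aestronglyMeasurable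
        (Filter.Eventually.of_forall fun z => by simpa [Real.norm_eq_abs] using hC z)
    have hg'_int : Integrable g' mm :=
      Integrable.mono' (integrable_const C) g₁.continuous.aestronglyMeasurable
        (Filter.Eventually.of_forall fun z => by
          have := hg₁mem z
          rw [Real.norm_eq_abs, abs_le]
          exact ⟨this.1, this.2⟩)
    have habs_int : Integrable (fun z => |g z - g' z|) mm := (hg_int.sub hg'_int).abs
    have h1 : |(∫ z, g z ∂mm) - ∫ z, g' z ∂mm| ≤ ∫ z, |g z - g' z| ∂mm := by
      rw [← integral_sub hg_int hg'_int]
      simpa [Real.norm_eq_abs] using norm_integral_le_integral_norm (fun z => g z - g' z) (μ := mm)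
    have hsplit : ∫ z, |g z - g' z| ∂mm =
        (∫ z in s, |g z - g' z| ∂mm) + ∫ z in sᶜ, |g z - g' z| ∂mm :=
      (integral_add_compl hs_meas habs_int).symm
    -- G and H composed with fst
    have hGH_sm : StronglyMeasurable fun z : X × U => ‖G z.1 - H z.1‖ :=
      ((hGsm.comp_measurable measurable_fst).sub
        (H.continuous.comp continuous_fst).stronglyMeasurable).norm
    have hGH_int : Integrable (fun z : X × U => ‖G z.1 - H z.1‖) mm :=
      Integrable.mono' (integrable_const (C + ‖H‖)) hGH_sm.aestronglyMeasurable
        (Filter.Eventually.of_forall fun z => by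
          rw [norm_norm]
          exact (norm_sub_le _ _).trans
            (add_le_add (hGbound _) (H.norm_coe_le_norm _)))
    -- pointwise bound on s
    have hptwise : ∀ z ∈ s, |g z - g' z| ≤ ‖G z.1 - H z.1‖ := by
      intro z hz
      have hg'z : g' z = max (-C) (min C (H z.1 ⟨z.2, hz⟩)) := by
        have := congrFun hg₁e (⟨z, hz⟩ : ↥s)
        exact this
      rw [hg'z]
      refine (aux_clamp (hC z)).trans ?_
      have heq : g z = G z.1 ⟨z.2, hz⟩ := rfl
      calc |g z - H z.1 ⟨z.2, hz⟩| = ‖(G z.1 - H z.1) ⟨z.2, hz⟩‖ := by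
            rw [heq, ContinuousMap.sub_apply, Real.norm_eq_abs]
        _ ≤ ‖G z.1 - H z.1‖ := ContinuousMap.norm_coe_le_norm _ _
    have hs_bound : ∫ z in s, |g z - g' z| ∂mm ≤ ε₁ := by
      calc ∫ z in s, |g z - g' z| ∂mm ≤ ∫ z in s, ‖G z.1 - H z.1‖ ∂mm :=
            setIntegral_mono_on habs_int.integrableOn hGH_int.integrableOn hs_meas hptwise
        _ ≤ ∫ z, ‖G z.1 - H z.1‖ ∂mm :=
            setIntegral_le_integral hGH_int
              (Filter.Eventually.of_forall fun z => norm_nonneg _)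
        _ = ∫ x, ‖G x - H x‖ ∂ν := by
            rw [← hfst]
            rw [integral_map measurable_fst.aemeasurable]
            rw [hfst]
            exact ((hGsm.sub H.continuous.stronglyMeasurable).norm).aestronglyMeasurable
        _ ≤ ε₁ := hHint
    -- bound on the complement
    have hcompl : mm sᶜ ≤ ηE := by
      have hscompl : sᶜ = Prod.snd ⁻¹' Kᶜ := rfl
      rw [hscompl, ← Measure.map_apply measurable_snd hKcomp.isClosed.measurableSet.compl]
      exact hsnd
    have hsc_bound : ∫ z in sᶜ, |g z - g' z| ∂mm ≤ 2 * C * η := by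
      have hb : ∀ z ∈ sᶜ, |g z - g' z| ≤ 2 * C := by
        intro z _
        have h1 := abs_le.1 (hC z)
        have h2 := hg₁mem z
        obtain ⟨h2a, h2b⟩ := h2
        rw [abs_le]
        exact ⟨by linarith, by linarith⟩
      have hηEnetop : ηE ≠ ⊤ := (hηE1.trans_lt ENNReal.one_lt_top).ne
      calc ∫ z in sᶜ, |g z - g' z| ∂mm ≤ ∫ _ in sᶜ, (2 * C) ∂mm :=
            setIntegral_mono_on habs_int.integrableOn
              (integrableOn_const (measure_ne_top mm _)) hs_meas.compl hb
        _ = (mm sᶜ).toReal * (2 * C) := by rw [setIntegral_const, smul_eq_mul]; rfl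
        _ ≤ η * (2 * C) := by
            have h1 : (mm sᶜ).toReal ≤ ηE.toReal := ENNReal.toReal_mono hηEnetop hcompl
            have h2 : ηE.toReal ≤ η := by
              calc ηE.toReal ≤ (ENNReal.ofReal η).toReal :=
                    ENNReal.toReal_mono ENNReal.ofReal_ne_top (min_le_left _ _)
                _ = η := ENNReal.toReal_ofReal hη.le
            exact mul_le_mul_of_nonneg_right (h1.trans h2) (by positivity)
        _ = 2 * C * η := by ring
    calc |(∫ z, g z ∂mm) - ∫ z, g' z ∂mm| ≤ ∫ z, |g z - g' z| ∂mm := h1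
      _ = (∫ z in s, |g z - g' z| ∂mm) + ∫ z in sᶜ, |g z - g' z| ∂mm := hsplit
      _ ≤ ε₁ + 2 * C * η := add_le_add hs_bound hsc_bound
  -- weak convergence applied to the extension
  have hg'cont : Continuous g' := g₁.continuous
  have hg'bd : ∃ C', ∀ z, |g' z| ≤ C' := ⟨C, fun z => by
    have := hg₁mem z
    rw [abs_le]; exact ⟨this.1, this.2⟩⟩
  have htend := hweak g' hg'cont hg'bd
  obtain ⟨N, hN⟩ := (Metric.tendsto_atTop.1 htend) (ε / 6) (by positivity)
  refine ⟨N, fun n hn => ?_⟩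
  have e1 : |(∫ z, g z ∂(μn n)) - ∫ z, g' z ∂(μn n)| ≤ ε₁ + 2 * C * η :=
    hEst (μn n) inferInstance (hmargn n) (hKρs n)
  have e2 : |(∫ z, g z ∂μ) - ∫ z, g' z ∂μ| ≤ ε₁ + 2 * C * η :=
    hEst μ inferInstance hmarg hKρ
  have e3 : |(∫ z, g' z ∂(μn n)) - ∫ z, g' z ∂μ| < ε / 6 := by
    have := hN n hn
    rwa [Real.dist_eq] at this
  have hηbound : 2 * C * η ≤ ε / 6 := by
    have hkey : ε / 6 = η * (2 * C + 1) := by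
      rw [hηdef]; field_simp
    rw [hkey]
    nlinarith [hη.le]
  rw [Real.dist_eq]
  calc |(∫ z, g z ∂(μn n)) - ∫ z, g z ∂μ|
      ≤ |(∫ z, g z ∂(μn n)) - ∫ z, g' z ∂(μn n)| + |(∫ z, g' z ∂(μn n)) - ∫ z, g z ∂μ| :=
        abs_sub_le _ _ _
    _ ≤ |(∫ z, g z ∂(μn n)) - ∫ z, g' z ∂(μn n)| +
        (|(∫ z, g' z ∂(μn n)) - ∫ z, g' z ∂μ| + |(∫ z, g' z ∂μ) - ∫ z, g z ∂μ|) :=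
        add_le_add le_rfl (abs_sub_le _ _ _)
    _ < ε := by
        have e2' : |(∫ z, g' z ∂μ) - ∫ z, g z ∂μ| ≤ ε₁ + 2 * C * η := by
          rw [abs_sub_comm]; exact e2
        rw [hε₁] at e1 e2'
        linarith
end

section
/- Let X = ℝ^d with Lebesgue measure λ, and let ψ be a σ-finite measure on ℝ^d with ψ ≪ λ and density h = dψ/dλ strictly positive λ-a.e. Then for every f ∈ L¹(λ), the measure F(A) = ∫_A f dλ satisfies F ≪ ψ. Consequently, if kernels γ_n → γ in the Young topology at input ψ, then for every f ∈ L¹(λ) and every bounded g: ℝ^d × U → ℝ continuous in u for each x, ∫ f(x) ∫ g(x,u) γ_n(du|x) λ(dx) → ∫ f(x) ∫ g(x,u) γ(du|x) λ(dx). -/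
open MeasureTheory ProbabilityTheory Filter Topology
open scoped ENNReal

section Aux

variable {d : ℕ} {U : Type*} [MeasurableSpace U] [TopologicalSpace U]
  [CompactSpace U] [PolishSpace U] [BorelSpace U]

private lemma stmt16_meas_kint (κ : Kernel (Fin d → ℝ) U) [IsSFiniteKernel κ]
    {g : (Fin d → ℝ) × U → ℝ} (hg : Measurable g) :
    Measurable fun x => ∫ u, g (x, u) ∂(κ x) :=
  (hg.stronglyMeasurable.integral_kernel_prod_right').measurable

private lemma stmt16_bound_kint (κ : Kernel (Fin d → ℝ) U) [IsMarkovKernel κ]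
    {g : (Fin d → ℝ) × U → ℝ} {C : ℝ} (hC : ∀ z, |g z| ≤ C) (x : Fin d → ℝ) :
    |∫ u, g (x, u) ∂(κ x)| ≤ C := by
  have h := norm_integral_le_of_norm_le_const (μ := κ x) (f := fun u => g (x, u)) (C := C)
    (ae_of_all _ fun u => by simpa using hC (x, u))
  simpa [Real.norm_eq_abs, measure_univ] using h

/-- truncation bound: `|max (-M) (min M t)| ≤ |t|` for `0 ≤ M`. -/
private lemma stmt16_trunc_abs_le {M t : ℝ} (hM : 0 ≤ M) : |max (-M) (min M t)| ≤ |t| := by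
  rw [abs_le]
  constructor
  · exact le_max_of_le_right (le_min (le_trans (neg_nonpos.2 (abs_nonneg t)) hM) (neg_abs_le t))
  · exact max_le (le_trans (neg_nonpos.2 hM) (abs_nonneg t))
      (le_trans (min_le_right _ _) (le_abs_self t))

private lemma stmt16_trunc_abs_le' {M t : ℝ} (hM : 0 ≤ M) : |max (-M) (min M t)| ≤ M := by
  rw [abs_le]
  exact ⟨le_max_left _ _, max_le (le_trans (neg_nonpos.2 hM) hM) (min_le_left _ _)⟩

/-- key estimate : difference of integrals against a bounded function. -/
private lemma stmt16_key_est {f e I : (Fin d → ℝ) → ℝ} {C : ℝ}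
    (hf : Integrable f volume) (he : Integrable e volume)
    (hI : AEStronglyMeasurable I (volume : Measure (Fin d → ℝ))) (hIb : ∀ x, |I x| ≤ C) :
    |(∫ x, f x * I x ∂volume) - ∫ x, e x * I x ∂volume| ≤ C * ∫ x, |f x - e x| ∂volume := by
  have hfi : Integrable (fun x => f x * I x) volume :=
    hf.bdd_mul (c := C) hI (ae_of_all _ fun x => by simpa [Real.norm_eq_abs] using hIb x)
      |>.congr (ae_of_all _ fun x => mul_comm _ _)
  have hei : Integrable (fun x => e x * I x) volume :=
    he.bdd_mul (c := C) hI (ae_of_all _ fun x => by simpa [Real.norm_eq_abs] using hIb x)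
      |>.congr (ae_of_all _ fun x => mul_comm _ _)
  rw [← integral_sub hfi hei]
  have h1 : |∫ x, (f x * I x - e x * I x) ∂volume| ≤ ∫ x, |f x * I x - e x * I x| ∂volume := by
    simpa [Real.norm_eq_abs] using
      norm_integral_le_integral_norm (μ := (volume : Measure (Fin d → ℝ)))
        (f := fun x => f x * I x - e x * I x)
  refine h1.trans ?_
  have h2 : ∫ x, |f x * I x - e x * I x| ∂volume ≤ ∫ x, |f x - e x| * C ∂volume := by
    refine integral_mono (hfi.sub hei).abs ((hf.sub he).abs.mul_const C) fun x => ?_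
    have : |f x * I x - e x * I x| = |f x - e x| * |I x| := by
      rw [← sub_mul, abs_mul]
    rw [this]
    exact mul_le_mul_of_nonneg_left (hIb x) (abs_nonneg _)
  refine h2.trans_eq ?_
  rw [integral_mul_const, mul_comm]

end Aux

/-- On `ℝ^d`, if `ψ ≪ λ` has an a.e. strictly positive density, then every `F(A) = ∫_A f dλ`
with `f ∈ L¹(λ)` is absolutely continuous w.r.t. `ψ`; consequently Young-topology
convergence of kernels at input `ψ` implies Borkar (weak*) convergence: testing against
every `f ∈ L¹(λ)` and bounded `g` continuous in the action. -/
theorem stmt16 {d : ℕ} {U : Type*} [MeasurableSpace U] [TopologicalSpace U]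
    [CompactSpace U] [PolishSpace U] [BorelSpace U]
    (ψ : Measure (Fin d → ℝ)) (hdens : (Fin d → ℝ) → ℝ≥0∞)
    (hdmeas : Measurable hdens)
    (hψ : ψ = (volume : Measure (Fin d → ℝ)).withDensity hdens)
    [SigmaFinite ψ]
    (hpos : ∀ᵐ x ∂(volume : Measure (Fin d → ℝ)), 0 < hdens x)
    (γn : ℕ → Kernel (Fin d → ℝ) U) (γ : Kernel (Fin d → ℝ) U)
    (hγn : ∀ n, IsMarkovKernel (γn n)) (hγ : IsMarkovKernel γ)
    (hyoung : ∀ g : (Fin d → ℝ) × U → ℝ, Measurable g → (∃ C, ∀ z, |g z| ≤ C) →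
      (∀ x, Continuous fun u => g (x, u)) →
      Tendsto (fun n => ∫ x, ∫ u, g (x, u) ∂(γn n x) ∂ψ) atTop
        (𝓝 (∫ x, ∫ u, g (x, u) ∂(γ x) ∂ψ))) :
    (∀ f : (Fin d → ℝ) → ℝ, Integrable f volume →
      ∀ A : Set (Fin d → ℝ), MeasurableSet A → ψ A = 0 → ∫ x in A, f x ∂volume = 0) ∧
    (∀ f : (Fin d → ℝ) → ℝ, Integrable f volume →
      ∀ g : (Fin d → ℝ) × U → ℝ, Measurable g → (∃ C, ∀ z, |g z| ≤ C) →
      (∀ x, Continuous fun u => g (x, u)) →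
      Tendsto (fun n => ∫ x, f x * ∫ u, g (x, u) ∂(γn n x) ∂volume) atTop
        (𝓝 (∫ x, f x * ∫ u, g (x, u) ∂(γ x) ∂volume))) := by
  -- the density is a.e. finite, by σ-finiteness of ψ
  have hfin : ∀ᵐ x ∂(volume : Measure (Fin d → ℝ)), hdens x < ∞ := by
    set s : Set (Fin d → ℝ) := {x | hdens x = ∞} with hs_def
    have hsm : MeasurableSet s := hdmeas (measurableSet_singleton ∞)
    have hzero : ∀ n, volume (s ∩ spanningSets ψ n) = 0 := by
      intro n
      by_contra hne
      have hmset : MeasurableSet (s ∩ spanningSets ψ n) :=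
        hsm.inter (measurableSet_spanningSets ψ n)
      set T := s ∩ spanningSets ψ n with hT_def
      have hTs : ∀ x ∈ T, hdens x = ∞ := fun x hx => hx.1
      have h1 : ψ T = ∞ := by
        rw [hψ, withDensity_apply _ hmset]
        calc ∫⁻ x in T, hdens x ∂volume
            = ∫⁻ _ in T, ∞ ∂volume :=
              setLIntegral_congr_fun_ae hmset (ae_of_all _ hTs)
          _ = ∞ * volume T := setLIntegral_const _ _
          _ = ∞ := by simp [hne]
      have h2 : ψ T < ∞ :=
        lt_of_le_of_lt (measure_mono Set.inter_subset_right) (measure_spanningSets_lt_top ψ n)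
      exact absurd h1 h2.ne
    have hvol : volume s = 0 := by
      have hcover : s ⊆ ⋃ n, s ∩ spanningSets ψ n := by
        rw [← Set.inter_iUnion, iUnion_spanningSets, Set.inter_univ]
      refine le_antisymm ?_ zero_le
      calc volume s ≤ volume (⋃ n, s ∩ spanningSets ψ n) := measure_mono hcover
        _ ≤ ∑' n, volume (s ∩ spanningSets ψ n) := measure_iUnion_le _
        _ = 0 := by simp [hzero]
    rw [ae_iff]
    have : {x | ¬ hdens x < ∞} = s := by
      ext x; simp [hs_def, lt_top_iff_ne_top]
    rwa [this]
  constructor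
  · -- absolute continuity part
    intro f hf A hA hA0
    have hlamA : volume A = 0 := by
      rw [hψ, withDensity_apply _ hA] at hA0
      have h0 : ∀ᵐ x ∂(volume.restrict A), hdens x = 0 :=
        (lintegral_eq_zero_iff hdmeas).mp hA0
      have hp : ∀ᵐ x ∂((volume : Measure (Fin d → ℝ)).restrict A), 0 < hdens x :=
        ae_restrict_of_ae hpos
      have hfalse : ∀ᵐ (_x : Fin d → ℝ) ∂(volume.restrict A), False := by
        filter_upwards [h0, hp] with x h1 h2
        exact h2.ne' h1
      have := hfalse
      rw [ae_iff] at this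
      simpa [Measure.restrict_apply_univ] using this
    rw [Measure.restrict_eq_zero.mpr hlamA]
    simp
  · -- weak* convergence part
    intro f hf g hgm hgb hgc
    obtain ⟨C, hC⟩ := hgb
    -- WLOG the bound is nonnegative
    set C' : ℝ := max C 0 with hC'_def
    have hC'0 : 0 ≤ C' := le_max_right _ _
    have hC' : ∀ z, |g z| ≤ C' := fun z => (hC z).trans (le_max_left _ _)
    -- replace f by a measurable representative
    set f0 : (Fin d → ℝ) → ℝ := hf.1.mk f with hf0_def
    have hf0m : StronglyMeasurable f0 := hf.1.stronglyMeasurable_mk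
    have hff0 : f =ᵐ[volume] f0 := hf.1.ae_eq_mk
    have hf0i : Integrable f0 volume := hf.congr hff0
    -- notations
    set Jn : ℕ → (Fin d → ℝ) → ℝ := fun n x => ∫ u, g (x, u) ∂(γn n x) with hJn_def
    set J : (Fin d → ℝ) → ℝ := fun x => ∫ u, g (x, u) ∂(γ x) with hJ_def
    have hJnm : ∀ n, Measurable (Jn n) := fun n => stmt16_meas_kint (γn n) hgm
    have hJm : Measurable J := stmt16_meas_kint γ hgm
    have hJnb : ∀ n x, |Jn n x| ≤ C' := fun n x => stmt16_bound_kint (γn n) hC' x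
    have hJb : ∀ x, |J x| ≤ C' := fun x => stmt16_bound_kint γ hC' x
    -- reduce to f0
    suffices h : Tendsto (fun n => ∫ x, f0 x * Jn n x ∂volume) atTop
        (𝓝 (∫ x, f0 x * J x ∂volume)) by
      have e1 : (fun n => ∫ x, f x * Jn n x ∂volume) = fun n => ∫ x, f0 x * Jn n x ∂volume := by
        funext n
        exact integral_congr_ae (hff0.mono fun x hx => by dsimp only; rw [hx])
      have e2 : ∫ x, f x * J x ∂volume = ∫ x, f0 x * J x ∂volume :=
        integral_congr_ae (hff0.mono fun x hx => by dsimp only; rw [hx])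
      rw [show (fun n => ∫ x, f x * Jn n x ∂volume) = fun n => ∫ x, f0 x * Jn n x ∂volume from e1,
        e2]
      exact h
    -- real-valued density
    set Hr : (Fin d → ℝ) → ℝ := fun x => ((hdens x).toNNReal : ℝ) with hHr_def
    have hHrm : Measurable Hr := hdmeas.ennreal_toNNReal.coe_nnreal_real
    have hHr_nonneg : ∀ x, 0 ≤ Hr x := fun x => NNReal.coe_nonneg _
    -- ψ as withDensity of an ℝ≥0 density
    have hψeq : ψ = (volume : Measure (Fin d → ℝ)).withDensity
        (fun x => ((hdens x).toNNReal : ℝ≥0∞)) := by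
      rw [hψ]
      exact (withDensity_congr_ae (hfin.mono fun x hx => ENNReal.coe_toNNReal hx.ne)).symm
    have hint_psi : ∀ φ : (Fin d → ℝ) → ℝ,
        ∫ x, φ x ∂ψ = ∫ x, Hr x * φ x ∂volume := by
      intro φ
      rw [hψeq, integral_withDensity_eq_integral_smul hdmeas.ennreal_toNNReal φ]
      rfl
    -- truncations
    set k : ℕ → (Fin d → ℝ) → ℝ :=
      fun M x => max (-(M : ℝ)) (min (M : ℝ) (f0 x / Hr x)) with hk_def
    have hkm : ∀ M, Measurable (k M) := fun M =>
      (measurable_const.max ((measurable_const.min ((hf0m.measurable).div hHrm))))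
    have hkb : ∀ M x, |k M x| ≤ (M : ℝ) := fun M x =>
      stmt16_trunc_abs_le' (Nat.cast_nonneg M)
    set e : ℕ → (Fin d → ℝ) → ℝ := fun M x => k M x * Hr x with he_def
    have hem : ∀ M, Measurable (e M) := fun M => (hkm M).mul hHrm
    have heb : ∀ M x, |e M x| ≤ |f0 x| := by
      intro M x
      rcases eq_or_ne (Hr x) 0 with h0 | h0
      · simp [he_def, h0]
      · have hHx : 0 < Hr x := lt_of_le_of_ne (hHr_nonneg x) (Ne.symm h0)
        have h1 : |k M x| ≤ |f0 x / Hr x| := stmt16_trunc_abs_le (Nat.cast_nonneg M)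
        have h2 : |e M x| = |k M x| * Hr x := by
          rw [he_def]; simp only []
          rw [abs_mul, abs_of_nonneg (hHr_nonneg x)]
        rw [h2]
        calc |k M x| * Hr x ≤ |f0 x / Hr x| * Hr x :=
              mul_le_mul_of_nonneg_right h1 (hHr_nonneg x)
          _ = |f0 x| / |Hr x| * Hr x := by rw [abs_div]
          _ = |f0 x| := by rw [abs_of_nonneg (hHr_nonneg x), div_mul_cancel₀ _ h0]
    have hei : ∀ M, Integrable (e M) volume := fun M =>
      hf0i.abs.mono' (hem M).aestronglyMeasurable
        (ae_of_all _ fun x => by simpa [Real.norm_eq_abs] using heb M x)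
    -- pointwise convergence of e M to f0  (a.e.)
    have hptwise : ∀ᵐ x ∂(volume : Measure (Fin d → ℝ)),
        Tendsto (fun M : ℕ => e M x) atTop (𝓝 (f0 x)) := by
      filter_upwards [hpos, hfin] with x h1 h2
      have hHx : 0 < Hr x := by
        simpa [hHr_def] using ENNReal.toNNReal_pos h1.ne' h2.ne
      set t : ℝ := f0 x / Hr x with ht_def
      have hev : (fun M : ℕ => e M x) =ᶠ[atTop] fun _ => f0 x := by
        filter_upwards [eventually_ge_atTop ⌈|t|⌉₊] with M hM
        have htM : |t| ≤ (M : ℝ) := (Nat.ceil_le.mp hM).trans' (le_refl _) |>.trans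
          (le_refl _) |>.trans (le_refl _)
        have hmin : min (M : ℝ) t = t := min_eq_right ((le_abs_self t).trans htM)
        have hmax : max (-(M : ℝ)) t = t := max_eq_right (by
          have := (neg_abs_le t).trans' (neg_le_neg htM)
          linarith [neg_abs_le t, htM])
        have : k M x = t := by rw [hk_def]; simp only []; rw [hmin, hmax]
        rw [he_def]; simp only []
        rw [this, ht_def, div_mul_cancel₀ _ hHx.ne']
      exact Tendsto.congr' hev.symm tendsto_const_nhds
    -- δ M := ∫ |f0 - e M| → 0
    set δ : ℕ → ℝ := fun M => ∫ x, |f0 x - e M x| ∂volume with hδ_def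
    have hδ0 : Tendsto δ atTop (𝓝 0) := by
      have := tendsto_integral_of_dominated_convergence
        (F := fun M x => |f0 x - e M x|) (f := fun _ => (0 : ℝ))
        (bound := fun x => 2 * |f0 x|)
        (fun M => ((hf0i.sub (hei M)).abs).aestronglyMeasurable)
        (hf0i.abs.const_mul 2)
        (fun M => ae_of_all _ fun x => by
          have := heb M x
          rw [Real.norm_eq_abs, abs_abs]
          calc |f0 x - e M x| ≤ |f0 x| + |e M x| := abs_sub _ _
            _ ≤ |f0 x| + |f0 x| := by linarith
            _ = 2 * |f0 x| := by ring)
        (by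
          filter_upwards [hptwise] with x hx
          have : Tendsto (fun M : ℕ => f0 x - e M x) atTop (𝓝 (f0 x - f0 x)) :=
            tendsto_const_nhds.sub hx
          rw [sub_self] at this
          simpa using this.abs)
      simpa using this
    -- the truncated tests converge by the Young hypothesis
    have hS : ∀ M : ℕ, Tendsto (fun n => ∫ x, e M x * Jn n x ∂volume) atTop
        (𝓝 (∫ x, e M x * J x ∂volume)) := by
      intro M
      have hg'm : Measurable fun z : (Fin d → ℝ) × U => k M z.1 * g z :=
        ((hkm M).comp measurable_fst).mul hgm
      have hg'b : ∃ C, ∀ z : (Fin d → ℝ) × U, |k M z.1 * g z| ≤ C := by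
        refine ⟨(M : ℝ) * C', fun z => ?_⟩
        rw [abs_mul]
        exact mul_le_mul (hkb M z.1) (hC' z) (abs_nonneg _) (Nat.cast_nonneg M)
      have hg'c : ∀ x, Continuous fun u => k M x * g (x, u) :=
        fun x => continuous_const.mul (hgc x)
      have h := hyoung _ hg'm hg'b hg'c
      have hrw : ∀ (κ : Kernel (Fin d → ℝ) U) (_ : IsMarkovKernel κ),
          ∫ x, ∫ u, k M x * g (x, u) ∂(κ x) ∂ψ
            = ∫ x, e M x * (∫ u, g (x, u) ∂(κ x)) ∂volume := by
        intro κ hκ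
        have h1 : ∀ x, ∫ u, k M x * g (x, u) ∂(κ x) = k M x * ∫ u, g (x, u) ∂(κ x) :=
          fun x => integral_const_mul _ _
        calc ∫ x, ∫ u, k M x * g (x, u) ∂(κ x) ∂ψ
            = ∫ x, k M x * ∫ u, g (x, u) ∂(κ x) ∂ψ := by simp_rw [h1]
          _ = ∫ x, Hr x * (k M x * ∫ u, g (x, u) ∂(κ x)) ∂volume := hint_psi _
          _ = ∫ x, e M x * (∫ u, g (x, u) ∂(κ x)) ∂volume := by
              congr 1; funext x; rw [he_def]; ring
      rw [hrw γ hγ] at h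
      have h2 : (fun n => ∫ x, ∫ u, k M x * g (x, u) ∂(γn n x) ∂ψ)
          = fun n => ∫ x, e M x * Jn n x ∂volume := by
        funext n; exact hrw (γn n) (hγn n)
      rw [h2] at h
      exact h
    -- ε/3 argument
    rw [Metric.tendsto_atTop]
    intro ε hε
    have hεpos : (0 : ℝ) < ε / 3 := by linarith
    -- choose M with C' * δ M < ε / 3
    have hCδ : Tendsto (fun M => C' * δ M) atTop (𝓝 0) := by
      simpa using hδ0.const_mul C'
    have : ∀ᶠ M in atTop, C' * δ M < ε / 3 :=
      (hCδ.eventually (eventually_lt_nhds hεpos)).mono fun M hM => by simpa using hM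
    obtain ⟨M, hM⟩ := this.exists
    -- choose N for the truncated convergence
    have hSM := (hS M)
    rw [Metric.tendsto_atTop] at hSM
    obtain ⟨N, hN⟩ := hSM (ε / 3) hεpos
    refine ⟨N, fun n hn => ?_⟩
    have est1 : |(∫ x, f0 x * Jn n x ∂volume) - ∫ x, e M x * Jn n x ∂volume| ≤ C' * δ M :=
      stmt16_key_est hf0i (hei M) (hJnm n).aestronglyMeasurable (hJnb n)
    have est2 : |(∫ x, f0 x * J x ∂volume) - ∫ x, e M x * J x ∂volume| ≤ C' * δ M :=
      stmt16_key_est hf0i (hei M) hJm.aestronglyMeasurable hJb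
    have est3 : |(∫ x, e M x * Jn n x ∂volume) - ∫ x, e M x * J x ∂volume| < ε / 3 := by
      have := hN n hn
      rwa [Real.dist_eq] at this
    rw [Real.dist_eq]
    have h3 : |(∫ x, e M x * J x ∂volume) - ∫ x, f0 x * J x ∂volume| ≤ C' * δ M := by
      rw [abs_sub_comm]; exact est2
    calc |(∫ x, f0 x * Jn n x ∂volume) - ∫ x, f0 x * J x ∂volume|
        ≤ |(∫ x, f0 x * Jn n x ∂volume) - ∫ x, e M x * Jn n x ∂volume|
          + |(∫ x, e M x * Jn n x ∂volume) - ∫ x, f0 x * J x ∂volume| := abs_sub_le _ _ _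
      _ ≤ |(∫ x, f0 x * Jn n x ∂volume) - ∫ x, e M x * Jn n x ∂volume|
          + (|(∫ x, e M x * Jn n x ∂volume) - ∫ x, e M x * J x ∂volume|
            + |(∫ x, e M x * J x ∂volume) - ∫ x, f0 x * J x ∂volume|) :=
          add_le_add le_rfl (abs_sub_le _ _ _)
      _ < ε := by linarith
end
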